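/- arXiv:2405.11900 — 2 statements merged into one kernel-verified Lean document; each statement's English description precedes it below -/
import Mathlib

section
/- Pointwise equivalence between the generalized specific energy and a power of the pressure deviation: let ρ* > 0 and l ≥ 1. There exist constants 0 < c ≤ C, depending only on P, ρ̃, ρ* and l, such that for all s ∈ [0,ρ*]: c·|P(s) − P̃|^{l+1} ≤ H_l(s) ≤ C·|P(s) − P̃|^{l+1}. In particular H_l(s) ≥ 0 for all s ∈ [0,ρ*]. -/
noncomputable section
open MeasureTheory

lemma rpow_helper {l : ℝ} (hl : 1 ≤ l) {x : ℝ} (hx : 0 ≤ x) :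
    x ^ (l - 1) * x = x ^ l := by
  rcases eq_or_lt_of_le hx with h | h
  · rw [← h, mul_zero, Real.zero_rpow (by linarith : l ≠ 0)]
  · have := Real.rpow_add_one (ne_of_gt h) (l - 1)
    rw [show l - 1 + 1 = l from by ring] at this
    exact this.symm

lemma rpow_succ_helper {l : ℝ} (hl : 1 ≤ l) {x : ℝ} (hx : 0 ≤ x) :
    x ^ l * x = x ^ (l + 1) := by
  have := rpow_helper (l := l + 1) (by linarith) hx
  rwa [show l + 1 - 1 = l from by ring] at this

lemma abs_rpow_nonpos_helper {l : ℝ} (hl : 1 ≤ l) {x : ℝ} (hx : x ≤ 0) :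
    |x| ^ (l - 1) * x = -((-x) ^ l) := by
  rw [abs_of_nonpos hx, ← rpow_helper hl (neg_nonneg.mpr hx)]
  ring

lemma abs_rpow_nonneg_helper {l : ℝ} (hl : 1 ≤ l) {x : ℝ} (hx : 0 ≤ x) :
    |x| ^ (l - 1) * x = x ^ l := by
  rw [abs_of_nonneg hx]; exact rpow_helper hl hx

lemma continuous_rpow_const {l : ℝ} (hl : 0 ≤ l) : Continuous (fun x : ℝ => x ^ l) :=
  continuous_iff_continuousAt.mpr fun x => Real.continuousAt_rpow_const x l (Or.inr hl)

/-- The generalized specific energy `H_l`: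
`H_l(s) = s ∫_ρ̃^s r⁻²|P(r)−P̃|^(l−1)(P(r)−P̃) dr` for `s ≠ 0`, continuously
extended by `H_l(0) = |P(0)−P̃|^l`. -/
def Hl (P : ℝ → ℝ) (ρt l s : ℝ) : ℝ :=
  if s = 0 then |P 0 - P ρt| ^ l
  else s * ∫ r in ρt..s, |P r - P ρt| ^ (l - 1) * (P r - P ρt) / r ^ 2

set_option maxHeartbeats 4000000 in
/-- Pointwise equivalence between the generalized specific
energy `H_l` and `|P − P̃|^(l+1)` on `[0, ρ*]`. -/
theorem Hl_equiv_pressure_deviation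
    (P : ℝ → ℝ) (ρt : ℝ) (hP : ContDiff ℝ 2 P)
    (hP' : ∀ s ≥ (0:ℝ), 0 < deriv P s) (hρt : 0 < ρt)
    (ρstar l : ℝ) (hρstar : 0 < ρstar) (hl : 1 ≤ l) :
    ∃ c C : ℝ, 0 < c ∧ c ≤ C ∧
      ∀ s ∈ Set.Icc (0:ℝ) ρstar,
        c * |P s - P ρt| ^ (l + 1) ≤ Hl P ρt l s ∧
        Hl P ρt l s ≤ C * |P s - P ρt| ^ (l + 1) ∧
        0 ≤ Hl P ρt l s := by
  have hPc : Continuous P := hP.continuous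
  have hP'c : Continuous (deriv P) := hP.continuous_deriv one_le_two
  have hPd : Differentiable ℝ P := hP.differentiable two_ne_zero
  set Pt := P ρt with hPtdef
  set R : ℝ := max ρstar ρt with hRdef
  have hρtR : ρt ≤ R := le_max_right _ _
  have hρsR : ρstar ≤ R := le_max_left _ _
  have hR0 : 0 < R := lt_of_lt_of_le hρt hρtR
  -- monotonicity of P on [0, ∞)
  have mono : StrictMonoOn P (Set.Ici 0) :=
    strictMonoOn_of_deriv_pos (convex_Ici 0) hPc.continuousOn
      (fun x hx => hP' x (le_of_lt (by simpa [interior_Ici] using hx)))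
  have hPmono : ∀ a b : ℝ, 0 ≤ a → a ≤ b → P a ≤ P b := fun a b ha hab =>
    mono.monotoneOn (Set.mem_Ici.mpr ha) (Set.mem_Ici.mpr (ha.trans hab)) hab
  have hPlt : ∀ a b : ℝ, 0 ≤ a → a < b → P a < P b := fun a b ha hab =>
    mono (Set.mem_Ici.mpr ha) (Set.mem_Ici.mpr (ha.trans hab.le)) hab
  -- min and max of deriv P on [0, R]
  obtain ⟨xm, hxm, hxmin⟩ := isCompact_Icc.exists_isMinOn
    (Set.nonempty_Icc.mpr hR0.le) hP'c.continuousOn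
  obtain ⟨xM, hxM, hxmax⟩ := isCompact_Icc.exists_isMaxOn
    (Set.nonempty_Icc.mpr hR0.le) hP'c.continuousOn
  set m := deriv P xm with hmdef
  set M := deriv P xM with hMdef
  have hm : 0 < m := hP' xm hxm.1
  have hM : 0 < M := hP' xM hxM.1
  -- mean value bounds
  have slope : ∀ a b : ℝ, 0 ≤ a → a ≤ b → b ≤ R →
      m * (b - a) ≤ P b - P a ∧ P b - P a ≤ M * (b - a) := by
    intro a b ha hab hbR
    rcases eq_or_lt_of_le hab with rfl | hab'
    · simp
    · obtain ⟨c, hc, hceq⟩ := exists_hasDerivAt_eq_slope P (deriv P) hab'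
        hPc.continuousOn (fun x _ => (hPd x).hasDerivAt)
      have hcI : c ∈ Set.Icc (0:ℝ) R := ⟨le_trans ha hc.1.le, le_trans hc.2.le hbR⟩
      have h1 : m ≤ deriv P c := isMinOn_iff.mp hxmin c hcI
      have h2 : deriv P c ≤ M := isMaxOn_iff.mp hxmax c hcI
      have hba : 0 < b - a := by linarith
      have heq : P b - P a = deriv P c * (b - a) := by
        field_simp at hceq; linarith [hceq]
      constructor <;> nlinarith
  -- pressure gaps
  set δ1 : ℝ := Pt - P (ρt/2) with hδ1def
  set δ2 : ℝ := Pt - P (ρt/4) with hδ2def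
  set A0 : ℝ := Pt - P 0 with hA0def
  have hδ1 : 0 < δ1 := sub_pos.mpr (hPlt _ _ (by linarith) (by linarith))
  have hδ2 : 0 < δ2 := sub_pos.mpr (hPlt _ _ (by linarith) (by linarith))
  have hA0 : 0 < A0 := sub_pos.mpr (hPlt _ _ le_rfl hρt)
  set B : ℝ := A0 ^ (l+1) with hBdef
  have hB : 0 < B := Real.rpow_pos_of_pos hA0 _
  -- integrand functions
  set u : ℝ → ℝ := fun r => (Pt - P r) ^ l / r ^ 2 with hudef
  set v : ℝ → ℝ := fun r => (P r - Pt) ^ l / r ^ 2 with hvdef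
  have hlpos : (0:ℝ) ≤ l := by linarith
  have hcl : Continuous fun x : ℝ => x ^ l := continuous_rpow_const hlpos
  have hne : ∀ {a b : ℝ}, 0 < a → 0 < b → ∀ r ∈ Set.uIcc a b, (r:ℝ) ^ 2 ≠ 0 := by
    intro a b ha hb r hr
    have : 0 < r := lt_of_lt_of_le (lt_min ha hb) hr.1
    positivity
  have hu_int : ∀ a b : ℝ, 0 < a → 0 < b → IntervalIntegrable u volume a b := by
    intro a b ha hb
    exact (((hcl.comp (continuous_const.sub hPc)).continuousOn).div
      (continuousOn_pow 2) (hne ha hb)).intervalIntegrable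
  have hv_int : ∀ a b : ℝ, 0 < a → 0 < b → IntervalIntegrable v volume a b := by
    intro a b ha hb
    exact (((hcl.comp (hPc.sub continuous_const)).continuousOn).div
      (continuousOn_pow 2) (hne ha hb)).intervalIntegrable
  have hq_int : ∀ a b : ℝ, 0 < a → 0 < b →
      IntervalIntegrable (fun r : ℝ => (r ^ 2)⁻¹) volume a b := by
    intro a b ha hb
    exact ((continuousOn_pow 2).inv₀ (hne ha hb)).intervalIntegrable
  have hinvsq : ∀ a b : ℝ, 0 < a → a ≤ b → (∫ r in a..b, (r ^ 2)⁻¹) = a⁻¹ - b⁻¹ := by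
    intro a b ha hab
    have hb : 0 < b := lt_of_lt_of_le ha hab
    have hd : ∀ x ∈ Set.uIcc a b, HasDerivAt (fun y : ℝ => -y⁻¹) ((x ^ 2)⁻¹) x := by
      intro x hx
      have hx0 : x ≠ 0 := ne_of_gt (lt_of_lt_of_le (lt_min ha hb) hx.1)
      simpa using (hasDerivAt_inv hx0).fun_neg
    rw [intervalIntegral.integral_eq_sub_of_hasDerivAt hd (hq_int a b ha hb)]
    ring
  -- rewriting Hl on the two sides of ρt
  have hHu : ∀ s : ℝ, 0 < s → s ≤ ρt → Hl P ρt l s = s * ∫ r in s..ρt, u r := by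
    intro s hs hsρt
    have hEq : Set.EqOn (fun r => |P r - Pt| ^ (l-1) * (P r - Pt) / r ^ 2)
        (fun r => -(u r)) (Set.uIcc s ρt) := by
      intro r hr
      rw [Set.uIcc_of_le hsρt] at hr
      have hr0 : 0 < r := lt_of_lt_of_le hs hr.1
      have hQ : P r - Pt ≤ 0 := sub_nonpos.mpr (hPmono r ρt hr0.le hr.2)
      show |P r - Pt| ^ (l-1) * (P r - Pt) / r ^ 2 = -(u r)
      rw [abs_rpow_nonpos_helper hl hQ, neg_sub]
      simp [hudef, neg_div]
    rw [Hl, if_neg (ne_of_gt hs), intervalIntegral.integral_symm,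
      intervalIntegral.integral_congr hEq, intervalIntegral.integral_neg]
    ring
  have hHv : ∀ s : ℝ, 0 < s → ρt ≤ s → Hl P ρt l s = s * ∫ r in ρt..s, v r := by
    intro s hs hρts
    have hEq : Set.EqOn (fun r => |P r - Pt| ^ (l-1) * (P r - Pt) / r ^ 2)
        (fun r => v r) (Set.uIcc ρt s) := by
      intro r hr
      rw [Set.uIcc_of_le hρts] at hr
      have hr0 : 0 < r := lt_of_lt_of_le hρt hr.1
      have hQ : 0 ≤ P r - Pt := sub_nonneg.mpr (hPmono ρt r hρt.le hr.1)
      show |P r - Pt| ^ (l-1) * (P r - Pt) / r ^ 2 = v r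
      rw [abs_rpow_nonneg_helper hl hQ]
    rw [Hl, if_neg (ne_of_gt hs), intervalIntegral.integral_congr hEq]
  -- Case A : 0 < s ≤ ρt/4
  have caseA : ∀ s : ℝ, 0 < s → s ≤ ρt/4 →
      (δ1^l/(2*B)) * |P s - Pt| ^ (l+1) ≤ Hl P ρt l s ∧
      Hl P ρt l s ≤ (1/δ2) * |P s - Pt| ^ (l+1) := by
    intro s hs hs4
    have hsρt : s ≤ ρt := by linarith
    have habs : |P s - Pt| = Pt - P s := by
      rw [abs_of_nonpos (sub_nonpos.mpr (hPmono s ρt hs.le hsρt)), neg_sub]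
    have hxδ2 : δ2 ≤ Pt - P s := by
      have := hPmono s (ρt/4) hs.le hs4
      rw [hδ2def]; linarith
    have hx0 : 0 < Pt - P s := lt_of_lt_of_le hδ2 hxδ2
    have hxA0 : Pt - P s ≤ A0 := by
      have := hPmono 0 s le_rfl hs.le
      rw [hA0def]; linarith
    rw [hHu s hs hsρt, habs]
    constructor
    · -- lower bound
      have hsplit : (∫ r in s..ρt, u r) = (∫ r in s..(ρt/2), u r) + ∫ r in (ρt/2)..ρt, u r :=
        (intervalIntegral.integral_add_adjacent_intervals
          (hu_int s (ρt/2) hs (by linarith)) (hu_int (ρt/2) ρt (by linarith) hρt)).symm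
      have h2 : 0 ≤ ∫ r in (ρt/2)..ρt, u r := by
        apply intervalIntegral.integral_nonneg (by linarith)
        intro r hr
        have hr0 : 0 < r := by have := hr.1; linarith
        have h1 : 0 ≤ Pt - P r := sub_nonneg.mpr (hPmono r ρt hr0.le hr.2)
        have h2 : 0 ≤ (Pt - P r) ^ l := Real.rpow_nonneg h1 l
        show 0 ≤ (Pt - P r) ^ l / r ^ 2
        positivity
      have h1 : δ1 ^ l * (s⁻¹ - (ρt/2)⁻¹) ≤ ∫ r in s..(ρt/2), u r := by
        have hcmp : ∀ r ∈ Set.Icc s (ρt/2), δ1 ^ l * (r^2)⁻¹ ≤ u r := by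
          intro r hr
          have hr0 : 0 < r := lt_of_lt_of_le hs hr.1
          have hPr : δ1 ≤ Pt - P r := by
            have := hPmono r (ρt/2) hr0.le hr.2; rw [hδ1def]; linarith
          have hrl : δ1 ^ l ≤ (Pt - P r) ^ l := Real.rpow_le_rpow hδ1.le hPr hlpos
          have hinv : (0:ℝ) ≤ (r^2)⁻¹ := by positivity
          show δ1 ^ l * (r^2)⁻¹ ≤ (Pt - P r) ^ l / r ^ 2
          rw [div_eq_mul_inv]
          exact mul_le_mul_of_nonneg_right hrl hinv
        have hmono_int := intervalIntegral.integral_mono_on (by linarith : s ≤ ρt/2)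
          ((hq_int s (ρt/2) hs (by linarith)).const_mul (δ1 ^ l))
          (hu_int s (ρt/2) hs (by linarith)) hcmp
        calc δ1 ^ l * (s⁻¹ - (ρt/2)⁻¹) = ∫ r in s..(ρt/2), δ1 ^ l * (r^2)⁻¹ := by
              rw [intervalIntegral.integral_const_mul, hinvsq s (ρt/2) hs (by linarith)]
          _ ≤ _ := hmono_int
      have hH : δ1 ^ l * (1 - 2 * s / ρt) ≤ s * ∫ r in s..ρt, u r := by
        have hstep : s * (δ1 ^ l * (s⁻¹ - (ρt/2)⁻¹)) ≤ s * ∫ r in s..ρt, u r := by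
          apply mul_le_mul_of_nonneg_left _ hs.le
          rw [hsplit]; linarith
        calc δ1 ^ l * (1 - 2 * s / ρt) = s * (δ1 ^ l * (s⁻¹ - (ρt/2)⁻¹)) := by
              field_simp
          _ ≤ _ := hstep
      have hhalf : δ1 ^ l / 2 ≤ δ1 ^ l * (1 - 2 * s / ρt) := by
        have h2s : 2 * s / ρt ≤ 1/2 := by rw [div_le_iff₀ hρt]; linarith
        nlinarith [Real.rpow_nonneg hδ1.le l]
      have hxB : (Pt - P s) ^ (l+1) ≤ B := Real.rpow_le_rpow hx0.le hxA0 (by linarith)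
      have hc0 : 0 ≤ δ1 ^ l / (2*B) := div_nonneg (Real.rpow_nonneg hδ1.le l) (by linarith)
      calc δ1^l/(2*B) * (Pt - P s)^(l+1) ≤ δ1^l/(2*B) * B :=
            mul_le_mul_of_nonneg_left hxB hc0
        _ = δ1^l/2 := by field_simp
        _ ≤ δ1 ^ l * (1 - 2*s/ρt) := hhalf
        _ ≤ _ := hH
    · -- upper bound
      have hup : (∫ r in s..ρt, u r) ≤ (Pt - P s) ^ l * (s⁻¹ - ρt⁻¹) := by
        have hcmp : ∀ r ∈ Set.Icc s ρt, u r ≤ (Pt - P s) ^ l * (r^2)⁻¹ := by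
          intro r hr
          have hr0 : 0 < r := lt_of_lt_of_le hs hr.1
          have h1 : 0 ≤ Pt - P r := sub_nonneg.mpr (hPmono r ρt hr0.le hr.2)
          have h2 : Pt - P r ≤ Pt - P s := by
            have := hPmono s r hs.le hr.1; linarith
          have hrl : (Pt - P r) ^ l ≤ (Pt - P s) ^ l := Real.rpow_le_rpow h1 h2 hlpos
          show (Pt - P r) ^ l / r ^ 2 ≤ (Pt - P s) ^ l * (r^2)⁻¹
          rw [div_eq_mul_inv]
          exact mul_le_mul_of_nonneg_right hrl (by positivity)
        have hmono_int := intervalIntegral.integral_mono_on hsρt (hu_int s ρt hs hρt)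
          ((hq_int s ρt hs hρt).const_mul ((Pt - P s) ^ l)) hcmp
        rwa [intervalIntegral.integral_const_mul, hinvsq s ρt hs hsρt] at hmono_int
      have hxl : 0 ≤ (Pt - P s) ^ l := Real.rpow_nonneg hx0.le l
      have hs1 : s * ((Pt - P s)^l * (s⁻¹ - ρt⁻¹)) ≤ (Pt - P s) ^ l := by
        have hh : s * (s⁻¹ - ρt⁻¹) ≤ 1 := by
          rw [mul_sub, mul_inv_cancel₀ (ne_of_gt hs)]
          have : 0 ≤ s * ρt⁻¹ := by positivity
          linarith
        calc s * ((Pt - P s)^l * (s⁻¹ - ρt⁻¹)) = (Pt - P s)^l * (s * (s⁻¹ - ρt⁻¹)) := by ring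
          _ ≤ (Pt - P s)^l * 1 := mul_le_mul_of_nonneg_left hh hxl
          _ = (Pt - P s)^l := mul_one _
      have hfin : (Pt - P s) ^ l ≤ 1/δ2 * (Pt - P s)^(l+1) := by
        rw [div_mul_eq_mul_div, le_div_iff₀ hδ2, one_mul, ← rpow_succ_helper hl hx0.le]
        exact mul_le_mul_of_nonneg_left hxδ2 hxl
      calc s * ∫ r in s..ρt, u r ≤ s * ((Pt - P s) ^ l * (s⁻¹ - ρt⁻¹)) :=
            mul_le_mul_of_nonneg_left hup hs.le
        _ ≤ (Pt - P s) ^ l := hs1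
        _ ≤ 1/δ2 * (Pt - P s)^(l+1) := hfin
  -- positivity facts for m, M powers
  have hm2l : 0 < (m/2) ^ l := Real.rpow_pos_of_pos (by linarith) l
  have hMl : 0 < M ^ (l+1) := Real.rpow_pos_of_pos hM _
  -- Case B : ρt/4 ≤ s ≤ ρt
  have caseB : ∀ s : ℝ, ρt/4 ≤ s → s ≤ ρt →
      ((m/2)^l/(8*ρt*M^(l+1))) * |P s - Pt| ^ (l+1) ≤ Hl P ρt l s ∧
      Hl P ρt l s ≤ (16/(m*ρt)) * |P s - Pt| ^ (l+1) := by
    intro s hs4 hsρt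
    have hs : 0 < s := by linarith
    have habs : |P s - Pt| = Pt - P s := by
      rw [abs_of_nonpos (sub_nonpos.mpr (hPmono s ρt hs.le hsρt)), neg_sub]
    obtain ⟨hxlow, hxhigh⟩ := slope s ρt hs.le hsρt hρtR
    rw [← hPtdef] at hxlow hxhigh
    have hx0 : (0:ℝ) ≤ Pt - P s := by
      have : 0 ≤ m * (ρt - s) := mul_nonneg hm.le (by linarith)
      linarith
    rw [hHu s hs hsρt, habs]
    constructor
    · -- lower bound
      set mid : ℝ := (s + ρt)/2 with hmiddef
      have hmids : s ≤ mid := by rw [hmiddef]; linarith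
      have hmidρt : mid ≤ ρt := by rw [hmiddef]; linarith
      have hmid0 : 0 < mid := lt_of_lt_of_le hs hmids
      have hsplit : (∫ r in s..ρt, u r) = (∫ r in s..mid, u r) + ∫ r in mid..ρt, u r :=
        (intervalIntegral.integral_add_adjacent_intervals
          (hu_int s mid hs hmid0) (hu_int mid ρt hmid0 hρt)).symm
      have h2 : 0 ≤ ∫ r in mid..ρt, u r := by
        apply intervalIntegral.integral_nonneg hmidρt
        intro r hr
        have hr0 : 0 < r := lt_of_lt_of_le hmid0 hr.1
        have h1 : 0 ≤ Pt - P r := sub_nonneg.mpr (hPmono r ρt hr0.le hr.2)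
        have h2 : 0 ≤ (Pt - P r) ^ l := Real.rpow_nonneg h1 l
        show 0 ≤ (Pt - P r) ^ l / r ^ 2
        positivity
      have hPmid : m * (ρt - s)/2 ≤ Pt - P mid := by
        have hsl := (slope mid ρt hmid0.le hmidρt hρtR).1
        rw [← hPtdef] at hsl
        have : ρt - mid = (ρt - s)/2 := by rw [hmiddef]; ring
        rw [this] at hsl; linarith
      have hconstpos : (0:ℝ) ≤ m * (ρt - s)/2 := by nlinarith
      have hcmp : ∀ r ∈ Set.Icc s mid, (m*(ρt-s)/2)^l * (ρt^2)⁻¹ ≤ u r := by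
        intro r hr
        have hr0 : 0 < r := lt_of_lt_of_le hs hr.1
        have hrρt : r ≤ ρt := le_trans hr.2 hmidρt
        have hPr : m*(ρt-s)/2 ≤ Pt - P r := by
          have := hPmono r mid hr0.le hr.2; linarith
        have hrl : (m*(ρt-s)/2)^l ≤ (Pt - P r)^l :=
          Real.rpow_le_rpow hconstpos hPr hlpos
        have hinv : (ρt^2)⁻¹ ≤ (r^2)⁻¹ :=
          inv_anti₀ (pow_pos hr0 2) (pow_le_pow_left₀ hr0.le hrρt 2)
        show (m*(ρt-s)/2)^l * (ρt^2)⁻¹ ≤ (Pt - P r)^l / r ^ 2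
        rw [div_eq_mul_inv]
        exact mul_le_mul hrl hinv (by positivity) (Real.rpow_nonneg (le_trans hconstpos hPr) l)
      have h1 : (mid - s) * ((m*(ρt-s)/2)^l * (ρt^2)⁻¹) ≤ ∫ r in s..mid, u r := by
        have hmono_int := intervalIntegral.integral_mono_on hmids
          intervalIntegrable_const (hu_int s mid hs hmid0) hcmp
        rwa [intervalIntegral.integral_const, smul_eq_mul] at hmono_int
      -- assemble
      have hHlow : s * ((mid - s) * ((m*(ρt-s)/2)^l * (ρt^2)⁻¹)) ≤ s * ∫ r in s..ρt, u r := by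
        apply mul_le_mul_of_nonneg_left _ hs.le
        rw [hsplit]; linarith
      have hfact : (m*(ρt-s)/2)^l = (m/2)^l * (ρt-s)^l := by
        rw [show m*(ρt-s)/2 = (m/2)*(ρt-s) from by ring,
          Real.mul_rpow (by linarith) (by linarith)]
      have hD : (Pt - P s)^(l+1) ≤ M^(l+1) * ((ρt-s)^l * (ρt-s)) := by
        rw [rpow_succ_helper hl (by linarith : (0:ℝ) ≤ ρt - s),
          ← Real.mul_rpow hM.le (by linarith)]
        exact Real.rpow_le_rpow hx0 hxhigh (by linarith)
      have hpos8 : (0:ℝ) < 8*ρt*M^(l+1) := by positivity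
      have step1 : ((m/2)^l/(8*ρt*M^(l+1))) * (Pt - P s)^(l+1) ≤
          ((m/2)^l/(8*ρt*M^(l+1))) * (M^(l+1) * ((ρt-s)^l * (ρt-s))) :=
        mul_le_mul_of_nonneg_left hD (div_nonneg hm2l.le hpos8.le)
      have step2 : ((m/2)^l/(8*ρt*M^(l+1))) * (M^(l+1) * ((ρt-s)^l * (ρt-s))) =
          (m/2)^l * (ρt-s)^l * (ρt-s) * (8*ρt)⁻¹ := by
        field_simp
      have step3 : (m/2)^l * (ρt-s)^l * (ρt-s) * (8*ρt)⁻¹ ≤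
          s * ((mid - s) * ((m*(ρt-s)/2)^l * (ρt^2)⁻¹)) := by
        rw [hfact, hmiddef]
        have hfac0 : (0:ℝ) ≤ (m/2)^l * (ρt-s)^l * (ρt-s) :=
          mul_nonneg (mul_nonneg hm2l.le (Real.rpow_nonneg (by linarith) l)) (by linarith)
        have hsc : (8*ρt : ℝ)⁻¹ ≤ s/2 * (ρt^2)⁻¹ := by
          rw [show s/2*(ρt^2)⁻¹ = s/(2*ρt^2) from by ring, inv_eq_one_div,
            div_le_div_iff₀ (by positivity) (by positivity)]
          nlinarith [mul_nonneg hρt.le (by linarith : (0:ℝ) ≤ 4*s - ρt)]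
        calc (m/2)^l * (ρt-s)^l * (ρt-s) * (8*ρt)⁻¹
            ≤ (m/2)^l * (ρt-s)^l * (ρt-s) * (s/2 * (ρt^2)⁻¹) :=
              mul_le_mul_of_nonneg_left hsc hfac0
          _ = s * (((s+ρt)/2 - s) * ((m/2)^l * (ρt-s)^l * (ρt^2)⁻¹)) := by ring
      linarith [step1, step2.le, step2.ge, step3, hHlow]
    · -- upper bound
      have hcmp : ∀ r ∈ Set.Icc s ρt, u r ≤ (Pt - P s)^l * (16/ρt^2) := by
        intro r hr
        have hr0 : 0 < r := lt_of_lt_of_le hs hr.1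
        have h1 : 0 ≤ Pt - P r := sub_nonneg.mpr (hPmono r ρt hr0.le hr.2)
        have h2 : Pt - P r ≤ Pt - P s := by
          have := hPmono s r hs.le hr.1; linarith
        have hrl : (Pt - P r)^l ≤ (Pt - P s)^l := Real.rpow_le_rpow h1 h2 hlpos
        have hinv : (r^2)⁻¹ ≤ 16/ρt^2 := by
          have hr4 : ρt/4 ≤ r := le_trans hs4 hr.1
          rw [inv_eq_one_div, div_le_div_iff₀ (by positivity) (by positivity)]
          nlinarith [mul_le_mul hr4 hr4 (by linarith) hr0.le]
        show (Pt - P r)^l / r^2 ≤ (Pt - P s)^l * (16/ρt^2)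
        rw [div_eq_mul_inv]
        exact mul_le_mul hrl hinv (by positivity) (Real.rpow_nonneg (le_trans h1 h2) l)
      have hup : (∫ r in s..ρt, u r) ≤ (ρt - s) * ((Pt - P s)^l * (16/ρt^2)) := by
        have hmono_int := intervalIntegral.integral_mono_on hsρt (hu_int s ρt hs hρt)
          intervalIntegrable_const hcmp
        rwa [intervalIntegral.integral_const, smul_eq_mul] at hmono_int
      have hxl : 0 ≤ (Pt - P s)^l := Real.rpow_nonneg hx0 l
      have hsucc : (Pt - P s)^l * (Pt - P s) = (Pt - P s)^(l+1) :=
        rpow_succ_helper hl hx0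
      calc s * ∫ r in s..ρt, u r ≤ s * ((ρt - s) * ((Pt - P s)^l * (16/ρt^2))) :=
            mul_le_mul_of_nonneg_left hup hs.le
        _ ≤ ρt * (((Pt - P s)/m) * ((Pt - P s)^l * (16/ρt^2))) := by
            have h1 : (0:ℝ) ≤ (Pt - P s)^l * (16/ρt^2) := by positivity
            have h2 : ρt - s ≤ (Pt - P s)/m := by
              rw [le_div_iff₀ hm]; nlinarith
            have h3 : s * ((ρt - s) * ((Pt - P s)^l * (16/ρt^2))) ≤
                ρt * ((ρt - s) * ((Pt - P s)^l * (16/ρt^2))) := by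
              apply mul_le_mul_of_nonneg_right hsρt
              exact mul_nonneg (by linarith) h1
            have h4 : ρt * ((ρt - s) * ((Pt - P s)^l * (16/ρt^2))) ≤
                ρt * (((Pt - P s)/m) * ((Pt - P s)^l * (16/ρt^2))) := by
              apply mul_le_mul_of_nonneg_left _ hρt.le
              exact mul_le_mul_of_nonneg_right h2 h1
            linarith
        _ = (16/(m*ρt)) * ((Pt - P s)^l * (Pt - P s)) := by field_simp
        _ = (16/(m*ρt)) * (Pt - P s)^(l+1) := by rw [hsucc]
  -- Case D : ρt ≤ s ≤ ρstar
  have caseD : ∀ s : ℝ, ρt ≤ s → s ≤ ρstar →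
      (ρt*(m/2)^l/(2*R^2*M^(l+1))) * |P s - Pt| ^ (l+1) ≤ Hl P ρt l s ∧
      Hl P ρt l s ≤ (R/(m*ρt^2)) * |P s - Pt| ^ (l+1) := by
    intro s hρts hsρ
    have hs : 0 < s := lt_of_lt_of_le hρt hρts
    have hsR : s ≤ R := le_trans hsρ hρsR
    have habs : |P s - Pt| = P s - Pt :=
      abs_of_nonneg (sub_nonneg.mpr (hPmono ρt s hρt.le hρts))
    obtain ⟨hxlow, hxhigh⟩ := slope ρt s hρt.le hρts hsR
    rw [← hPtdef] at hxlow hxhigh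
    have hx0 : (0:ℝ) ≤ P s - Pt := by
      have : 0 ≤ m * (s - ρt) := mul_nonneg hm.le (by linarith)
      linarith
    rw [hHv s hs hρts, habs]
    constructor
    · -- lower bound
      set mid : ℝ := (ρt + s)/2 with hmiddef
      have hmids : mid ≤ s := by rw [hmiddef]; linarith
      have hρtmid : ρt ≤ mid := by rw [hmiddef]; linarith
      have hmid0 : 0 < mid := lt_of_lt_of_le hρt hρtmid
      have hsplit : (∫ r in ρt..s, v r) = (∫ r in ρt..mid, v r) + ∫ r in mid..s, v r :=
        (intervalIntegral.integral_add_adjacent_intervals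
          (hv_int ρt mid hρt hmid0) (hv_int mid s hmid0 hs)).symm
      have h2 : 0 ≤ ∫ r in ρt..mid, v r := by
        apply intervalIntegral.integral_nonneg hρtmid
        intro r hr
        have hr0 : 0 < r := lt_of_lt_of_le hρt hr.1
        have h1 : 0 ≤ P r - Pt := sub_nonneg.mpr (hPmono ρt r hρt.le hr.1)
        have h2 : 0 ≤ (P r - Pt) ^ l := Real.rpow_nonneg h1 l
        show 0 ≤ (P r - Pt) ^ l / r ^ 2
        positivity
      have hPmid : m * (s - ρt)/2 ≤ P mid - Pt := by
        have hsl := (slope ρt mid hρt.le hρtmid (le_trans hmids hsR)).1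
        rw [← hPtdef] at hsl
        have hmm : mid - ρt = (s - ρt)/2 := by rw [hmiddef]; ring
        rw [hmm] at hsl; linarith
      have hconstpos : (0:ℝ) ≤ m * (s - ρt)/2 := by
        have : 0 ≤ m * (s - ρt) := mul_nonneg hm.le (by linarith)
        linarith
      have hcmp : ∀ r ∈ Set.Icc mid s, (m*(s-ρt)/2)^l * (R^2)⁻¹ ≤ v r := by
        intro r hr
        have hr0 : 0 < r := lt_of_lt_of_le hmid0 hr.1
        have hrR : r ≤ R := le_trans hr.2 hsR
        have hPr : m*(s-ρt)/2 ≤ P r - Pt := by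
          have := hPmono mid r hmid0.le hr.1; linarith
        have hrl : (m*(s-ρt)/2)^l ≤ (P r - Pt)^l :=
          Real.rpow_le_rpow hconstpos hPr hlpos
        have hinv : (R^2)⁻¹ ≤ (r^2)⁻¹ :=
          inv_anti₀ (pow_pos hr0 2) (pow_le_pow_left₀ hr0.le hrR 2)
        show (m*(s-ρt)/2)^l * (R^2)⁻¹ ≤ (P r - Pt)^l / r ^ 2
        rw [div_eq_mul_inv]
        exact mul_le_mul hrl hinv (by positivity) (Real.rpow_nonneg (le_trans hconstpos hPr) l)
      have h1 : (s - mid) * ((m*(s-ρt)/2)^l * (R^2)⁻¹) ≤ ∫ r in mid..s, v r := by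
        have hmono_int := intervalIntegral.integral_mono_on hmids
          intervalIntegrable_const (hv_int mid s hmid0 hs) hcmp
        rwa [intervalIntegral.integral_const, smul_eq_mul] at hmono_int
      have hHlow : s * ((s - mid) * ((m*(s-ρt)/2)^l * (R^2)⁻¹)) ≤ s * ∫ r in ρt..s, v r := by
        apply mul_le_mul_of_nonneg_left _ hs.le
        rw [hsplit]; linarith
      have hfact : (m*(s-ρt)/2)^l = (m/2)^l * (s-ρt)^l := by
        rw [show m*(s-ρt)/2 = (m/2)*(s-ρt) from by ring,
          Real.mul_rpow (by linarith) (by linarith)]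
      have hD : (P s - Pt)^(l+1) ≤ M^(l+1) * ((s-ρt)^l * (s-ρt)) := by
        rw [rpow_succ_helper hl (by linarith : (0:ℝ) ≤ s - ρt),
          ← Real.mul_rpow hM.le (by linarith)]
        exact Real.rpow_le_rpow hx0 hxhigh (by linarith)
      have hpos2 : (0:ℝ) < 2*R^2*M^(l+1) := by positivity
      have step1 : (ρt*(m/2)^l/(2*R^2*M^(l+1))) * (P s - Pt)^(l+1) ≤
          (ρt*(m/2)^l/(2*R^2*M^(l+1))) * (M^(l+1) * ((s-ρt)^l * (s-ρt))) :=
        mul_le_mul_of_nonneg_left hD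
          (div_nonneg (mul_nonneg hρt.le hm2l.le) hpos2.le)
      have step2 : (ρt*(m/2)^l/(2*R^2*M^(l+1))) * (M^(l+1) * ((s-ρt)^l * (s-ρt))) =
          ρt * ((m/2)^l * (s-ρt)^l * (s-ρt)) * (2*R^2)⁻¹ := by
        field_simp
      have step3 : ρt * ((m/2)^l * (s-ρt)^l * (s-ρt)) * (2*R^2)⁻¹ ≤
          s * ((s - mid) * ((m*(s-ρt)/2)^l * (R^2)⁻¹)) := by
        rw [hfact, hmiddef]
        have hfac0 : (0:ℝ) ≤ (m/2)^l * (s-ρt)^l * (s-ρt) :=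
          mul_nonneg (mul_nonneg hm2l.le (Real.rpow_nonneg (by linarith) l)) (by linarith)
        calc ρt * ((m/2)^l * (s-ρt)^l * (s-ρt)) * (2*R^2)⁻¹
            ≤ s * ((m/2)^l * (s-ρt)^l * (s-ρt)) * (2*R^2)⁻¹ := by
              apply mul_le_mul_of_nonneg_right _ (by positivity)
              exact mul_le_mul_of_nonneg_right hρts hfac0
          _ = s * ((s - (ρt+s)/2) * ((m/2)^l * (s-ρt)^l * (R^2)⁻¹)) := by ring
      linarith [step1, step2.le, step2.ge, step3, hHlow]
    · -- upper bound
      have hcmp : ∀ r ∈ Set.Icc ρt s, v r ≤ (P s - Pt)^l * (ρt^2)⁻¹ := by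
        intro r hr
        have hr0 : 0 < r := lt_of_lt_of_le hρt hr.1
        have h1 : 0 ≤ P r - Pt := sub_nonneg.mpr (hPmono ρt r hρt.le hr.1)
        have h2 : P r - Pt ≤ P s - Pt := by
          have := hPmono r s hr0.le hr.2; linarith
        have hrl : (P r - Pt)^l ≤ (P s - Pt)^l := Real.rpow_le_rpow h1 h2 hlpos
        have hinv : (r^2)⁻¹ ≤ (ρt^2)⁻¹ :=
          inv_anti₀ (pow_pos hρt 2) (pow_le_pow_left₀ hρt.le hr.1 2)
        show (P r - Pt)^l / r^2 ≤ (P s - Pt)^l * (ρt^2)⁻¹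
        rw [div_eq_mul_inv]
        exact mul_le_mul hrl hinv (by positivity) (Real.rpow_nonneg (le_trans h1 h2) l)
      have hup : (∫ r in ρt..s, v r) ≤ (s - ρt) * ((P s - Pt)^l * (ρt^2)⁻¹) := by
        have hmono_int := intervalIntegral.integral_mono_on hρts (hv_int ρt s hρt hs)
          intervalIntegrable_const hcmp
        rwa [intervalIntegral.integral_const, smul_eq_mul] at hmono_int
      have hxl : 0 ≤ (P s - Pt)^l := Real.rpow_nonneg hx0 l
      have h2' : s - ρt ≤ (P s - Pt)/m := by
        rw [le_div_iff₀ hm]; nlinarith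
      have hq0 : (0:ℝ) ≤ (P s - Pt)^l * (ρt^2)⁻¹ := mul_nonneg hxl (by positivity)
      calc s * ∫ r in ρt..s, v r ≤ s * ((s - ρt) * ((P s - Pt)^l * (ρt^2)⁻¹)) :=
            mul_le_mul_of_nonneg_left hup hs.le
        _ ≤ R * (((P s - Pt)/m) * ((P s - Pt)^l * (ρt^2)⁻¹)) := by
            have h3 : s * ((s - ρt) * ((P s - Pt)^l * (ρt^2)⁻¹)) ≤
                R * ((s - ρt) * ((P s - Pt)^l * (ρt^2)⁻¹)) :=
              mul_le_mul_of_nonneg_right hsR (mul_nonneg (by linarith) hq0)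
            have h4 : R * ((s - ρt) * ((P s - Pt)^l * (ρt^2)⁻¹)) ≤
                R * (((P s - Pt)/m) * ((P s - Pt)^l * (ρt^2)⁻¹)) := by
              apply mul_le_mul_of_nonneg_left _ hR0.le
              exact mul_le_mul_of_nonneg_right h2' hq0
            linarith
        _ = (R/(m*ρt^2)) * ((P s - Pt)^l * (P s - Pt)) := by
            rw [div_eq_mul_inv, div_eq_mul_inv, mul_inv]
            ring
        _ = (R/(m*ρt^2)) * (P s - Pt)^(l+1) := by rw [rpow_succ_helper hl hx0]
  -- Case E : s = 0
  have habs0 : |P 0 - Pt| = A0 := by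
    rw [abs_of_nonpos (sub_nonpos.mpr (hPmono 0 ρt le_rfl hρt.le)), hA0def]; ring
  have hH0 : Hl P ρt l 0 = A0 ^ l := by
    have h0 : Hl P ρt l 0 = |P 0 - P ρt| ^ l := if_pos rfl
    rw [h0, ← hPtdef, habs0]
  have caseE :
      (1/A0) * |P 0 - Pt| ^ (l+1) ≤ Hl P ρt l 0 ∧
      Hl P ρt l 0 ≤ (1/A0) * |P 0 - Pt| ^ (l+1) := by
    have hval : (1/A0) * |P 0 - Pt| ^ (l+1) = A0 ^ l := by
      rw [habs0, ← rpow_succ_helper hl hA0.le]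
      field_simp
    rw [hH0, hval]
    exact ⟨le_rfl, le_rfl⟩
  -- assemble the constants
  set c1 : ℝ := δ1^l/(2*B) with hc1def
  set c2 : ℝ := (m/2)^l/(8*ρt*M^(l+1)) with hc2def
  set c3 : ℝ := ρt*(m/2)^l/(2*R^2*M^(l+1)) with hc3def
  set C1 : ℝ := 1/δ2 with hC1def
  set C2 : ℝ := 16/(m*ρt) with hC2def
  set C3 : ℝ := R/(m*ρt^2) with hC3def
  set c0 : ℝ := min (min (1/A0) c1) (min c2 c3) with hc0def
  set C0 : ℝ := max (max (1/A0) C1) (max C2 C3) with hC0def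
  have hc1 : 0 < c1 := div_pos (Real.rpow_pos_of_pos hδ1 l) (by linarith)
  have hc2 : 0 < c2 := div_pos hm2l (mul_pos (by linarith) hMl)
  have hc3 : 0 < c3 := div_pos (mul_pos hρt hm2l)
    (mul_pos (by positivity) hMl)
  have hA0inv : (0:ℝ) < 1/A0 := by positivity
  have hc0 : 0 < c0 := lt_min (lt_min hA0inv hc1) (lt_min hc2 hc3)
  refine ⟨c0, max C0 c0, hc0, le_max_right _ _, ?_⟩
  intro s hsI
  obtain ⟨hs0, hsρ⟩ := hsI
  have hDnn : 0 ≤ |P s - Pt| ^ (l+1) := Real.rpow_nonneg (abs_nonneg _) _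
  have key : ∀ cx Cx : ℝ, c0 ≤ cx → Cx ≤ C0 →
      cx * |P s - Pt|^(l+1) ≤ Hl P ρt l s → Hl P ρt l s ≤ Cx * |P s - Pt|^(l+1) →
      c0 * |P s - Pt|^(l+1) ≤ Hl P ρt l s ∧
      Hl P ρt l s ≤ (max C0 c0) * |P s - Pt|^(l+1) ∧ 0 ≤ Hl P ρt l s := by
    intro cx Cx h1 h2 h3 h4
    have l1 : c0 * |P s - Pt|^(l+1) ≤ cx * |P s - Pt|^(l+1) :=
      mul_le_mul_of_nonneg_right h1 hDnn
    have l2 : Cx * |P s - Pt|^(l+1) ≤ (max C0 c0) * |P s - Pt|^(l+1) :=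
      mul_le_mul_of_nonneg_right (le_trans h2 (le_max_left _ _)) hDnn
    exact ⟨le_trans l1 h3, le_trans h4 l2,
      le_trans (mul_nonneg hc0.le hDnn) (le_trans l1 h3)⟩
  rcases eq_or_lt_of_le hs0 with rfl | hs0'
  · exact key (1/A0) (1/A0)
      (le_trans (min_le_left _ _) (min_le_left _ _))
      (le_trans (le_max_left _ _) (le_max_left _ _)) caseE.1 caseE.2
  · rcases le_or_gt s (ρt/4) with h4 | h4
    · exact key c1 C1
        (le_trans (min_le_left _ _) (min_le_right _ _))
        (le_trans (le_max_right _ _) (le_max_left _ _))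
        (caseA s hs0' h4).1 (caseA s hs0' h4).2
    · rcases le_or_gt s ρt with hsρt | hsρt
      · exact key c2 C2
          (le_trans (min_le_right _ _) (min_le_left _ _))
          (le_trans (le_max_left _ _) (le_max_right _ _))
          (caseB s h4.le hsρt).1 (caseB s h4.le hsρt).2
      · exact key c3 C3
          (le_trans (min_le_right _ _) (min_le_right _ _))
          (le_trans (le_max_right _ _) (le_max_right _ _))
          (caseD s hsρt.le hsρ).1 (caseD s hsρt.le hsρ).2
end
end

section
/- L^q control of the pressure deviation by the potential energy (estimate (2.2) of the paper): let ρ* > 0, d ≥ 1 a natural number, and 2 ≤ q < ∞. There exists a constant C > 0 depending only on P, ρ̃, ρ* and q such that for every measurable function ρ : ℝ^d → ℝ with 0 ≤ ρ(x) ≤ ρ* for almost every x, one has ∫_{ℝ^d} |P(ρ(x)) − P̃|^q dx ≤ C·∫_{ℝ^d} H₁(ρ(x)) dx, as an inequality in [0,∞]. -/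
noncomputable section
open MeasureTheory

private lemma ftcP (P : ℝ → ℝ) (hP : ContDiff ℝ 2 P) (a b : ℝ) :
    ∫ r in a..b, deriv P r = P b - P a :=
  intervalIntegral.integral_deriv_eq_sub
    (fun x _ => (hP.differentiable (by norm_num)).differentiableAt)
    ((hP.continuous_deriv (by norm_num)).intervalIntegrable a b)

private lemma mvt_lb (P : ℝ → ℝ) (hP : ContDiff ℝ 2 P) {a b m : ℝ} (hab : a ≤ b)
    (hm : ∀ r ∈ Set.Icc a b, m ≤ deriv P r) : m * (b - a) ≤ P b - P a := by
  rw [← ftcP P hP a b]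
  have h := intervalIntegral.integral_mono_on hab
    (intervalIntegrable_const (μ := volume) (c := m))
    ((hP.continuous_deriv (by norm_num)).intervalIntegrable a b) hm
  simpa [intervalIntegral.integral_const, smul_eq_mul, mul_comm] using h

private lemma mvt_ub (P : ℝ → ℝ) (hP : ContDiff ℝ 2 P) {a b L : ℝ} (hab : a ≤ b)
    (hL : ∀ r ∈ Set.Icc a b, deriv P r ≤ L) : P b - P a ≤ L * (b - a) := by
  rw [← ftcP P hP a b]
  have h := intervalIntegral.integral_mono_on hab
    ((hP.continuous_deriv (by norm_num)).intervalIntegrable a b)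
    (intervalIntegrable_const (μ := volume) (c := L)) hL
  simpa [intervalIntegral.integral_const, smul_eq_mul, mul_comm] using h

private lemma intsq {s b : ℝ} (hs : 0 < s) (hsb : s ≤ b) :
    ∫ r in s..b, (r ^ 2)⁻¹ = s⁻¹ - b⁻¹ := by
  have h : ∀ x ∈ Set.uIcc s b, HasDerivAt (fun r : ℝ => -r⁻¹) ((x ^ 2)⁻¹) x := by
    intro x hx
    rw [Set.uIcc_of_le hsb] at hx
    have hx0 : x ≠ 0 := ne_of_gt (lt_of_lt_of_le hs hx.1)
    exact (hasDerivAt_inv hx0).neg.congr_deriv (neg_neg _)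
  have hint : IntervalIntegrable (fun r : ℝ => (r ^ 2)⁻¹) volume s b := by
    apply ContinuousOn.intervalIntegrable
    apply ContinuousOn.inv₀ (by fun_prop)
    intro x hx
    rw [Set.uIcc_of_le hsb] at hx
    exact pow_ne_zero _ (ne_of_gt (lt_of_lt_of_le hs hx.1))
  rw [intervalIntegral.integral_eq_sub_of_hasDerivAt h hint]
  ring

private lemma intlin {a b c : ℝ} :
    ∫ r in a..b, (r - c) = (b - c) ^ 2 / 2 - (a - c) ^ 2 / 2 := by
  rw [intervalIntegral.integral_sub intervalIntegral.intervalIntegrable_id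
    (intervalIntegrable_const (μ := volume) (c := c)),
    integral_id, intervalIntegral.integral_const, smul_eq_mul]
  ring

set_option maxHeartbeats 2000000 in
private lemma pointwise_bound (P : ℝ → ℝ) (ρt : ℝ) (hP : ContDiff ℝ 2 P)
    (hP' : ∀ s ≥ (0:ℝ), 0 < deriv P s) (hρt : 0 < ρt)
    (ρstar : ℝ) (hρstar : 0 < ρstar) (q : ℝ) (hq : 2 ≤ q) :
    ∃ C > (0:ℝ), ∀ s, 0 ≤ s → s ≤ ρstar →
      |P s - P ρt| ^ q ≤ C * Hl P ρt 1 s := by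
  set M := max ρstar ρt with hMdef
  have hρtM : ρt ≤ M := le_max_right _ _
  have hρsM : ρstar ≤ M := le_max_left _ _
  have hM0 : 0 < M := lt_of_lt_of_le hρt hρtM
  have hq0 : (0:ℝ) < q := by linarith
  have hcd : Continuous (deriv P) := hP.continuous_deriv (by norm_num)
  -- min of deriv P on [0, M]
  obtain ⟨am, hamI, ham⟩ := isCompact_Icc.exists_isMinOn (Set.nonempty_Icc.2 hM0.le)
    hcd.continuousOn
  set m := deriv P am with hmdef
  have hm0 : 0 < m := hP' am hamI.1
  have hm : ∀ r ∈ Set.Icc (0:ℝ) M, m ≤ deriv P r := fun r hr => isMinOn_iff.1 ham r hr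
  -- max of deriv P on [0, M]
  obtain ⟨aL, haLI, haL⟩ := isCompact_Icc.exists_isMaxOn (Set.nonempty_Icc.2 hM0.le)
    hcd.continuousOn
  set L := deriv P aL with hLdef
  have hL : ∀ r ∈ Set.Icc (0:ℝ) M, deriv P r ≤ L := fun r hr => isMaxOn_iff.1 haL r hr
  have hL0 : 0 < L := lt_of_lt_of_le hm0 (hL am hamI)
  -- max of |P · − P ρt| on [0, M]
  obtain ⟨aK, haKI, haK⟩ := isCompact_Icc.exists_isMaxOn (Set.nonempty_Icc.2 hM0.le)
    (((hP.continuous.sub continuous_const).abs).continuousOn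
      : ContinuousOn (fun s => |P s - P ρt|) (Set.Icc 0 M))
  set K := |P aK - P ρt| + 1 with hKdef
  have hK1 : (1:ℝ) ≤ K := le_add_of_nonneg_left (abs_nonneg _)
  have hK0 : (0:ℝ) < K := lt_of_lt_of_le one_pos hK1
  have hK : ∀ r ∈ Set.Icc (0:ℝ) M, |P r - P ρt| ≤ K := by
    intro r hr
    have h := isMaxOn_iff.1 haK r hr
    simp only [Pi.sub_apply] at h
    rw [hKdef]
    linarith
  -- signed gap bounds
  have gap_up : ∀ r, ρt ≤ r → r ≤ M → m * (r - ρt) ≤ P r - P ρt := fun r h1 h2 =>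
    mvt_lb P hP h1 (fun x hx => hm x ⟨le_trans hρt.le hx.1, le_trans hx.2 h2⟩)
  have gap_dn : ∀ r, 0 ≤ r → r ≤ ρt → m * (ρt - r) ≤ P ρt - P r := fun r h1 h2 =>
    mvt_lb P hP h2 (fun x hx => hm x ⟨le_trans h1 hx.1, le_trans hx.2 hρtM⟩)
  have gap_abs : ∀ r, 0 ≤ r → r ≤ M → |P r - P ρt| ≤ L * |r - ρt| := by
    intro r h1 h2
    rcases le_total ρt r with h | h
    · have h3 := mvt_ub P hP h (fun x hx => hL x ⟨le_trans hρt.le hx.1, le_trans hx.2 h2⟩)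
      have h4 := gap_up r h h2
      rw [abs_of_nonneg (by nlinarith : (0:ℝ) ≤ P r - P ρt),
        abs_of_nonneg (by linarith : (0:ℝ) ≤ r - ρt)]
      exact h3
    · have h3 := mvt_ub P hP h (fun x hx => hL x ⟨le_trans h1 hx.1, le_trans hx.2 hρtM⟩)
      have h4 := gap_dn r h1 h
      rw [abs_of_nonpos (by nlinarith : P r - P ρt ≤ 0),
        abs_of_nonpos (by linarith : r - ρt ≤ 0)]
      linarith
  -- integrability of the integrand on intervals away from 0
  have hfint : ∀ a b : ℝ, 0 < a → a ≤ b →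
      IntervalIntegrable (fun r => (P r - P ρt) / r ^ 2) volume a b := by
    intro a b ha hab
    apply ContinuousOn.intervalIntegrable
    rw [Set.uIcc_of_le hab]
    apply ContinuousOn.div ((hP.continuous.sub continuous_const).continuousOn) (by fun_prop)
    intro x hx
    exact pow_ne_zero _ (ne_of_gt (lt_of_lt_of_le ha hx.1))
  -- constants
  set C0 : ℝ := K ^ q / (m * ρt) with hC0def
  set C1 : ℝ := K ^ (q - 2) * L ^ 2 * (4 * M ^ 2) / (ρt * m) with hC1def
  set C2 : ℝ := 12 * K ^ q / (m * ρt) with hC2def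
  have hKq : (0:ℝ) < K ^ q := Real.rpow_pos_of_pos hK0 q
  have hKq2 : (0:ℝ) < K ^ (q - 2) := Real.rpow_pos_of_pos hK0 (q - 2)
  have hC0 : 0 < C0 := by rw [hC0def]; positivity
  have hC1 : 0 < C1 := by rw [hC1def]; positivity
  have hC2 : 0 < C2 := by rw [hC2def]; positivity
  refine ⟨C0 + C1 + C2, by positivity, ?_⟩
  intro s hs0 hsstar
  have hsM : s ≤ M := le_trans hsstar hρsM
  have hKs : |P s - P ρt| ≤ K := hK s ⟨hs0, hsM⟩
  have hLHS_Kq : |P s - P ρt| ^ q ≤ K ^ q :=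
    Real.rpow_le_rpow (abs_nonneg _) hKs hq0.le
  rcases eq_or_lt_of_le hs0 with h0 | hs0pos
  · -- case s = 0
    have hH : Hl P ρt 1 (0:ℝ) = |P 0 - P ρt| := by simp [Hl]
    have hg := gap_dn 0 le_rfl hρt.le
    have hH1 : m * ρt ≤ Hl P ρt 1 (0:ℝ) := by
      rw [hH]
      calc m * ρt = m * (ρt - 0) := by ring
        _ ≤ P ρt - P 0 := hg
        _ = -(P 0 - P ρt) := by ring
        _ ≤ |P 0 - P ρt| := neg_le_abs _
    have hCeq : C0 * (m * ρt) = K ^ q := by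
      rw [hC0def]; field_simp
    rw [← h0]
    rw [← h0] at hLHS_Kq
    calc |P 0 - P ρt| ^ q ≤ K ^ q := hLHS_Kq
      _ = C0 * (m * ρt) := hCeq.symm
      _ ≤ C0 * Hl P ρt 1 0 := mul_le_mul_of_nonneg_left hH1 hC0.le
      _ ≤ (C0 + C1 + C2) * Hl P ρt 1 0 := by
          have h0H : 0 ≤ Hl P ρt 1 (0:ℝ) := le_trans (by positivity) hH1
          nlinarith
  · -- s > 0
    have hsne : s ≠ 0 := ne_of_gt hs0pos
    have hHval : Hl P ρt 1 s = s * ∫ r in ρt..s, (P r - P ρt) / r ^ 2 := by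
      simp [Hl, hsne]
    rcases le_or_gt s (ρt / 2) with hcase | hcase
    · -- case B : 0 < s ≤ ρt / 2
      set b : ℝ := 3 * ρt / 4 with hbdef
      have hb0 : 0 < b := by rw [hbdef]; positivity
      have hsb : s ≤ b := by rw [hbdef]; linarith
      have hbρt : b ≤ ρt := by rw [hbdef]; linarith
      set δ : ℝ := m * ρt / 4 with hδdef
      have hδ0 : 0 < δ := by rw [hδdef]; positivity
      have hpt : ∀ r ∈ Set.Icc s b, (P r - P ρt) / r ^ 2 ≤ -δ / r ^ 2 := by
        intro r hr
        have hr0 : 0 < r := lt_of_lt_of_le hs0pos hr.1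
        have hg := gap_dn r hr0.le (le_trans hr.2 hbρt)
        have hnum : P r - P ρt ≤ -δ := by
          have h1 : m * (ρt - b) ≤ m * (ρt - r) :=
            mul_le_mul_of_nonneg_left (by linarith [hr.2]) hm0.le
          have hb4 : m * (ρt - b) = δ := by rw [hδdef, hbdef]; ring
          linarith
        exact (div_le_div_iff_of_pos_right (by positivity)).mpr hnum
      have hintlow : IntervalIntegrable (fun r : ℝ => -δ / r ^ 2) volume s b := by
        apply ContinuousOn.intervalIntegrable
        rw [Set.uIcc_of_le hsb]
        apply ContinuousOn.div continuousOn_const (by fun_prop)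
        intro x hx
        exact pow_ne_zero _ (ne_of_gt (lt_of_lt_of_le hs0pos hx.1))
      have hcomp : (∫ r in s..b, -δ / r ^ 2) = -δ * (s⁻¹ - b⁻¹) := by
        simp only [div_eq_mul_inv]
        rw [intervalIntegral.integral_const_mul, intsq hs0pos hsb]
      have hJ1 : (∫ r in s..b, (P r - P ρt) / r ^ 2) ≤ -δ * (s⁻¹ - b⁻¹) := by
        have h := intervalIntegral.integral_mono_on hsb (hfint s b hs0pos hsb) hintlow hpt
        linarith [h, hcomp.le, hcomp.ge]
      have hJ2 : (∫ r in b..ρt, (P r - P ρt) / r ^ 2) ≤ 0 := by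
        have hpt2 : ∀ r ∈ Set.Icc b ρt, (P r - P ρt) / r ^ 2 ≤ (0:ℝ) := by
          intro r hr
          have hr0 : 0 < r := lt_of_lt_of_le hb0 hr.1
          have hg := gap_dn r hr0.le hr.2
          have hnum : P r - P ρt ≤ 0 := by
            nlinarith [mul_nonneg hm0.le (sub_nonneg.2 hr.2)]
          exact div_nonpos_of_nonpos_of_nonneg hnum (by positivity)
        have h := intervalIntegral.integral_mono_on hbρt (hfint b ρt hb0 hbρt)
          (intervalIntegrable_const (μ := volume) (c := (0:ℝ))) hpt2
        simpa using h
      have hsplit : (∫ r in s..b, (P r - P ρt) / r ^ 2)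
            + ∫ r in b..ρt, (P r - P ρt) / r ^ 2
          = ∫ r in s..ρt, (P r - P ρt) / r ^ 2 :=
        intervalIntegral.integral_add_adjacent_intervals (hfint s b hs0pos hsb)
          (hfint b ρt hb0 hbρt)
      have hIint : δ * (s⁻¹ - b⁻¹) ≤ ∫ r in ρt..s, (P r - P ρt) / r ^ 2 := by
        rw [intervalIntegral.integral_symm]
        linarith [hsplit, hJ1, hJ2]
      have hHge : m * ρt / 12 ≤ Hl P ρt 1 s := by
        rw [hHval]
        have h1 : s * (δ * (s⁻¹ - b⁻¹)) ≤ s * ∫ r in ρt..s, (P r - P ρt) / r ^ 2 :=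
          mul_le_mul_of_nonneg_left hIint hs0pos.le
        have h2 : s * (δ * (s⁻¹ - b⁻¹)) = δ * (1 - s / b) := by
          field_simp
        have h3 : m * ρt / 12 ≤ δ * (1 - s / b) := by
          rw [hδdef, hbdef]
          have h4 : s / (3 * ρt / 4) ≤ 2 / 3 := by
            rw [div_le_iff₀ (by positivity)]
            linarith
          nlinarith
        linarith
      have hCeq : C2 * (m * ρt / 12) = K ^ q := by
        rw [hC2def]; field_simp
      calc |P s - P ρt| ^ q ≤ K ^ q := hLHS_Kq
        _ = C2 * (m * ρt / 12) := hCeq.symm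
        _ ≤ C2 * Hl P ρt 1 s := mul_le_mul_of_nonneg_left hHge hC2.le
        _ ≤ (C0 + C1 + C2) * Hl P ρt 1 s := by
            have h0H : 0 ≤ Hl P ρt 1 s := le_trans (by positivity) hHge
            nlinarith
    · -- case A : ρt/2 < s ≤ M
      have hIint : m / M ^ 2 * ((s - ρt) ^ 2 / 2) ≤ ∫ r in ρt..s, (P r - P ρt) / r ^ 2 := by
        rcases le_total ρt s with hρts | hsρt
        · have hpt : ∀ r ∈ Set.Icc ρt s, m / M ^ 2 * (r - ρt) ≤ (P r - P ρt) / r ^ 2 := by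
            intro r hr
            have hr0 : 0 < r := lt_of_lt_of_le hρt hr.1
            have hrM : r ≤ M := le_trans hr.2 hsM
            have h4 := gap_up r hr.1 hrM
            have hr2M : r ^ 2 ≤ M ^ 2 := pow_le_pow_left₀ hr0.le hrM 2
            have h5 : m / M ^ 2 * (r - ρt) = m * (r - ρt) / M ^ 2 := by ring
            rw [h5, div_le_div_iff₀ (by positivity) (by positivity)]
            nlinarith [mul_nonneg hm0.le (sub_nonneg.2 hr.1),
              mul_nonneg (mul_nonneg hm0.le (sub_nonneg.2 hr.1)) (sub_nonneg.2 hr2M)]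
          have hintlow : IntervalIntegrable (fun r : ℝ => m / M ^ 2 * (r - ρt)) volume ρt s :=
            Continuous.intervalIntegrable (by fun_prop) _ _
          have h := intervalIntegral.integral_mono_on hρts hintlow (hfint ρt s hρt hρts) hpt
          have hcomp : (∫ r in ρt..s, m / M ^ 2 * (r - ρt))
              = m / M ^ 2 * ((s - ρt) ^ 2 / 2) := by
            rw [intervalIntegral.integral_const_mul, intlin]; ring
          linarith [h, hcomp.le, hcomp.ge]
        · have hpt : ∀ r ∈ Set.Icc s ρt, (P r - P ρt) / r ^ 2 ≤ m / M ^ 2 * (r - ρt) := by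
            intro r hr
            have hr0 : 0 < r := lt_of_lt_of_le hs0pos hr.1
            have hrM : r ≤ M := le_trans hr.2 hρtM
            have hg := gap_dn r hr0.le hr.2
            have hr2M : r ^ 2 ≤ M ^ 2 := pow_le_pow_left₀ hr0.le hrM 2
            have h5 : m / M ^ 2 * (r - ρt) = m * (r - ρt) / M ^ 2 := by ring
            rw [h5, div_le_div_iff₀ (by positivity) (by positivity)]
            nlinarith [mul_nonneg hm0.le (sub_nonneg.2 hr.2),
              mul_nonneg (mul_nonneg hm0.le (sub_nonneg.2 hr.2)) (sub_nonneg.2 hr2M)]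
          have hintlow : IntervalIntegrable (fun r : ℝ => m / M ^ 2 * (r - ρt)) volume s ρt :=
            Continuous.intervalIntegrable (by fun_prop) _ _
          have h := intervalIntegral.integral_mono_on hsρt (hfint s ρt hs0pos hsρt) hintlow hpt
          have hcomp : (∫ r in s..ρt, m / M ^ 2 * (r - ρt))
              = -(m / M ^ 2 * ((s - ρt) ^ 2 / 2)) := by
            rw [intervalIntegral.integral_const_mul, intlin]; ring
          rw [intervalIntegral.integral_symm]
          linarith [h, hcomp.le, hcomp.ge]
      have hInn : (0:ℝ) ≤ m / M ^ 2 * ((s - ρt) ^ 2 / 2) := by positivity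
      have hHge : ρt * m / (4 * M ^ 2) * (s - ρt) ^ 2 ≤ Hl P ρt 1 s := by
        rw [hHval]
        calc ρt * m / (4 * M ^ 2) * (s - ρt) ^ 2
            = (ρt / 2) * (m / M ^ 2 * ((s - ρt) ^ 2 / 2)) := by ring
          _ ≤ s * ∫ r in ρt..s, (P r - P ρt) / r ^ 2 :=
              mul_le_mul hcase.le hIint hInn hs0pos.le
      have h0H : 0 ≤ Hl P ρt 1 s := le_trans (by positivity) hHge
      rcases eq_or_ne (P s - P ρt) 0 with hz | hz
      · rw [hz]
        simp only [abs_zero]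
        rw [Real.zero_rpow hq0.ne']
        exact mul_nonneg (by positivity) h0H
      · have habs : 0 < |P s - P ρt| := abs_pos.2 hz
        have hqsplit : q = (q - 2) + 2 := by ring
        have hsplitpow : |P s - P ρt| ^ q
            = |P s - P ρt| ^ (q - 2) * |P s - P ρt| ^ (2:ℝ) := by
          rw [← Real.rpow_add habs]
          norm_num
        have h2 : |P s - P ρt| ^ (2:ℝ) ≤ L ^ 2 * (s - ρt) ^ 2 := by
          rw [show (2:ℝ) = ((2:ℕ):ℝ) by norm_num, Real.rpow_natCast]
          calc |P s - P ρt| ^ 2 ≤ (L * |s - ρt|) ^ 2 :=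
                pow_le_pow_left₀ (abs_nonneg _) (gap_abs s hs0 hsM) 2
            _ = L ^ 2 * (s - ρt) ^ 2 := by rw [mul_pow, sq_abs]
        have h3 : |P s - P ρt| ^ (q - 2) ≤ K ^ (q - 2) :=
          Real.rpow_le_rpow (abs_nonneg _) hKs (by linarith)
        have h4 : |P s - P ρt| ^ q ≤ K ^ (q - 2) * (L ^ 2 * (s - ρt) ^ 2) := by
          rw [hsplitpow]
          exact mul_le_mul h3 h2 (Real.rpow_nonneg (abs_nonneg _) _) hKq2.le
        have hCeq : C1 * (ρt * m / (4 * M ^ 2)) = K ^ (q - 2) * L ^ 2 := by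
          rw [hC1def]; field_simp
        calc |P s - P ρt| ^ q ≤ K ^ (q - 2) * (L ^ 2 * (s - ρt) ^ 2) := h4
          _ = C1 * (ρt * m / (4 * M ^ 2)) * (s - ρt) ^ 2 := by rw [hCeq]; ring
          _ = C1 * (ρt * m / (4 * M ^ 2) * (s - ρt) ^ 2) := by ring
          _ ≤ C1 * Hl P ρt 1 s := mul_le_mul_of_nonneg_left hHge hC1.le
          _ ≤ (C0 + C1 + C2) * Hl P ρt 1 s := by nlinarith
/-- `L^q` control of the pressure deviation by the potential
energy, as an inequality in `[0,∞]`. -/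
theorem pressure_deviation_Lq_le_potential_energy
    (P : ℝ → ℝ) (ρt : ℝ) (hP : ContDiff ℝ 2 P)
    (hP' : ∀ s ≥ (0:ℝ), 0 < deriv P s) (hρt : 0 < ρt)
    (ρstar : ℝ) (hρstar : 0 < ρstar) (d : ℕ) (hd : 1 ≤ d)
    (q : ℝ) (hq : 2 ≤ q) :
    ∃ C > (0:ℝ), ∀ ρ : EuclideanSpace ℝ (Fin d) → ℝ,
      Measurable ρ → (∀ᵐ x, 0 ≤ ρ x ∧ ρ x ≤ ρstar) →
      ∫⁻ x, ENNReal.ofReal (|P (ρ x) - P ρt| ^ q) ≤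
        ENNReal.ofReal C * ∫⁻ x, ENNReal.ofReal (Hl P ρt 1 (ρ x)) := by
  obtain ⟨C, hC, hpt⟩ := pointwise_bound P ρt hP hP' hρt ρstar hρstar q hq
  refine ⟨C, hC, ?_⟩
  intro ρ hmeas hae
  calc ∫⁻ x, ENNReal.ofReal (|P (ρ x) - P ρt| ^ q)
      ≤ ∫⁻ x, ENNReal.ofReal C * ENNReal.ofReal (Hl P ρt 1 (ρ x)) := by
        apply lintegral_mono_ae
        filter_upwards [hae] with x hx
        rw [← ENNReal.ofReal_mul hC.le]
        exact ENNReal.ofReal_le_ofReal (hpt (ρ x) hx.1 hx.2)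
    _ = ENNReal.ofReal C * ∫⁻ x, ENNReal.ofReal (Hl P ρt 1 (ρ x)) :=
        lintegral_const_mul' _ _ ENNReal.ofReal_ne_top
end
end
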